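/- arXiv:0904.4060 — 3 statements merged into one kernel-verified Lean document; each statement's English description precedes it below -/
import Mathlib

section
/- Let A = {a_1,...,a_{n+2}} ⊂ R^n be a non-degenerate circuit with b = (b_1,...,b_{n+2}) the signed-cofactor generator of the null space of the lifted matrix Â. Suppose c_1,...,c_{n+2} ∈ C* are such that the exponential sum g(y) = ∑_{i=1}^{n+2} c_i e^{a_i·y} has a degenerate complex root ζ ∈ C^n (i.e., g(ζ) = 0 and ∇g(ζ) = 0). Then ∏_{i=1}^{n+2} |c_i/b_i|^{b_i} = 1. -/
/-- `A = {a 0, …, a (n+1)} ⊂ ℝⁿ` is a (non-degenerate) circuit: it is affinely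
dependent, but every proper subset is affinely independent. -/
def IsNondegCircuit {n : ℕ} (a : Fin (n + 2) → Fin n → ℝ) : Prop :=
  ¬ AffineIndependent ℝ a ∧ ∀ j : Fin (n + 2), AffineIndependent ℝ (a ∘ j.succAbove)

/-- The lifted `(n+1) × (n+2)` matrix `Â` whose `j`-th column is `(1, a j)`. -/
noncomputable def Ahat {n : ℕ} (a : Fin (n + 2) → Fin n → ℝ) :
    Matrix (Fin (n + 1)) (Fin (n + 2)) ℝ :=
  Matrix.of fun i j => Fin.cases 1 (fun i' => a j i') i

/-- `b j = (-1)^j` times the determinant of `Â` with its `j`-th column deleted. -/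
noncomputable def bVec {n : ℕ} (a : Fin (n + 2) → Fin n → ℝ) : Fin (n + 2) → ℝ :=
  fun j => (-1 : ℝ) ^ (j : ℕ) * ((Ahat a).submatrix id j.succAbove).det

lemma hbrow {n : ℕ} (a : Fin (n + 2) → Fin n → ℝ) (i : Fin (n + 1)) :
    ∑ j, Ahat a i j * bVec a j = 0 := by
  classical
  set M : Matrix (Fin (n + 2)) (Fin (n + 2)) ℝ :=
    Matrix.of (Fin.cons (Ahat a i) (Ahat a)) with hM
  have hdet : M.det = 0 := by
    apply Matrix.det_zero_of_row_eq (i := (0 : Fin (n+2))) (j := i.succ)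
      (Fin.succ_ne_zero i).symm
    funext j
    simp [hM, Matrix.of_apply, Fin.cons_zero, Fin.cons_succ]
    rfl
  rw [Matrix.det_succ_row_zero] at hdet
  rw [← hdet]
  refine Finset.sum_congr rfl fun j _ => ?_
  have h1 : M 0 j = Ahat a i j := by
    simp [hM, Matrix.of_apply, Fin.cons_zero]
    rfl
  have h2 : M.submatrix Fin.succ j.succAbove = (Ahat a).submatrix id j.succAbove := by
    ext r s
    simp [hM, Matrix.of_apply, Fin.cons_succ]
    rfl
  rw [h1, h2, bVec]; ring

lemma bVec_ne_zero {n : ℕ} (a : Fin (n + 2) → Fin n → ℝ) (j : Fin (n + 2))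
    (hp : AffineIndependent ℝ (a ∘ j.succAbove)) : bVec a j ≠ 0 := by
  classical
  have hdetne : ((Ahat a).submatrix id j.succAbove).det ≠ 0 := by
    intro hdet
    obtain ⟨v, hv, hmv⟩ := Matrix.exists_mulVec_eq_zero_iff.2 hdet
    apply hv
    have h0 : ∑ k, v k = 0 := by
      have := congrFun hmv 0
      simpa [Matrix.mulVec, dotProduct, Ahat] using this
    have h1 : ∑ k, v k • (a ∘ j.succAbove) k = 0 := by
      funext i'
      have := congrFun hmv i'.succ
      simpa [Matrix.mulVec, dotProduct, Ahat, mul_comm] using this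
    have := affineIndependent_iff.mp hp Finset.univ v h0 h1
    funext k; exact this k (Finset.mem_univ k)
  simp [bVec, hdetne]

theorem stmt6 {n : ℕ} (a : Fin (n + 2) → Fin n → ℝ) (ha : IsNondegCircuit a)
    (c : Fin (n + 2) → ℂ) (hc : ∀ i, c i ≠ 0) (ζ : Fin n → ℂ)
    (hg : ∑ i, c i * Complex.exp (∑ k, (a i k : ℂ) * ζ k) = 0)
    (hdg : ∀ k, ∑ i, c i * (a i k : ℂ) * Complex.exp (∑ l, (a i l : ℂ) * ζ l) = 0) :
    ∏ i, ‖c i / (bVec a i : ℂ)‖ ^ (bVec a i) = 1 := by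
  classical
  obtain ⟨-, hsub⟩ := ha
  have hbne : ∀ j, bVec a j ≠ 0 := fun j => bVec_ne_zero a j (hsub j)
  set S : Fin (n + 2) → ℂ := fun j => ∑ k, (a j k : ℂ) * ζ k with hS
  set u : Fin (n + 2) → ℂ := fun j => c j * Complex.exp (S j) with hu
  have hune : ∀ j, u j ≠ 0 := fun j => mul_ne_zero (hc j) (Complex.exp_ne_zero _)
  have hrowu : ∀ i : Fin (n + 1), ∑ j, (Ahat a i j : ℂ) * u j = 0 := by
    intro i
    induction i using Fin.cases with
    | zero => simpa [Ahat, hu, hS] using hg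
    | succ k =>
      rw [← hdg k]
      refine Finset.sum_congr rfl fun j _ => ?_
      simp only [Ahat, Matrix.of_apply, Fin.cases_succ, hu, hS]
      ring
  have hrowb : ∀ i : Fin (n + 1), ∑ j, (Ahat a i j : ℂ) * (bVec a j : ℂ) = 0 := by
    intro i
    have h := hbrow a i
    have h2 : ((∑ j, Ahat a i j * bVec a j : ℝ) : ℂ) = 0 := by rw [h]; simp
    push_cast at h2
    exact h2
  set lam : ℂ := u 0 / (bVec a 0 : ℂ) with hlam
  have hb0 : ((bVec a 0 : ℝ) : ℂ) ≠ 0 := by exact_mod_cast hbne 0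
  have hlam0 : u 0 = lam * (bVec a 0 : ℂ) := by rw [hlam, div_mul_cancel₀ _ hb0]
  have hukey : ∀ j, u j = lam * (bVec a j : ℂ) := by
    set v : Fin (n + 2) → ℂ := fun j => u j - lam * (bVec a j : ℂ) with hvdef
    have hv0 : v 0 = 0 := by simp [hvdef, ← hlam0]
    have hrowv : ∀ i : Fin (n + 1), ∑ j, (Ahat a i j : ℂ) * v j = 0 := by
      intro i
      have h1 := hrowu i; have h2 := hrowb i
      have e : ∑ j, (Ahat a i j : ℂ) * v j
          = (∑ j, (Ahat a i j : ℂ) * u j) - lam * ∑ j, (Ahat a i j : ℂ) * (bVec a j : ℂ) := by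
        rw [Finset.mul_sum, ← Finset.sum_sub_distrib]
        refine Finset.sum_congr rfl fun j _ => ?_
        simp only [hvdef]; ring
      rw [e, h1, h2]; ring
    set Mc : Matrix (Fin (n + 1)) (Fin (n + 1)) ℂ :=
      ((Ahat a).submatrix id Fin.succ).map Complex.ofReal with hMc
    have hdetc : Mc.det ≠ 0 := by
      have e : Mc.det = ((((Ahat a).submatrix id Fin.succ).det : ℝ) : ℂ) := by
        rw [hMc]
        exact (RingHom.map_det Complex.ofRealHom _).symm
      rw [e]
      simp only [Ne, Complex.ofReal_eq_zero]
      intro hdet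
      exact hbne 0 (by simp [bVec, hdet])
    have hker : Mc.mulVec (fun k => v k.succ) = 0 := by
      funext i
      have h := hrowv i
      rw [Fin.sum_univ_succ] at h
      rw [hv0, mul_zero, zero_add] at h
      simpa [Matrix.mulVec, dotProduct, hMc, Fin.zero_succAbove] using h
    have hvz : (fun k : Fin (n+1) => v k.succ) = 0 := by
      by_contra hne
      exact hdetc (Matrix.exists_mulVec_eq_zero_iff.1 ⟨_, hne, hker⟩)
    intro j
    have hvj : v j = 0 := by
      induction j using Fin.cases with
      | zero => exact hv0
      | succ k =>
        have := congrFun hvz k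
        simpa [Fin.zero_succAbove] using this
    have := sub_eq_zero.mp (by simpa [hvdef] using hvj)
    exact this
  have hlamne : lam ≠ 0 := by
    intro h
    exact hune 0 (by rw [hukey 0, h, zero_mul])
  have hrpos : (0 : ℝ) < ‖lam‖ := norm_pos_iff.mpr hlamne
  have hsum1 : ∑ j, bVec a j = 0 := by
    have := hbrow a 0
    simpa [Ahat] using this
  have hsum2 : ∀ k : Fin n, ∑ j, a j k * bVec a j = 0 := by
    intro k
    have := hbrow a k.succ
    simpa [Ahat] using this
  have habs : ∀ j, ‖c j / (bVec a j : ℂ)‖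
      = ‖lam‖ * Real.exp (-∑ k, a j k * (ζ k).re) := by
    intro j
    have hbj : ((bVec a j : ℝ) : ℂ) ≠ 0 := by exact_mod_cast hbne j
    have hukey' : c j * Complex.exp (S j) = lam * (bVec a j : ℂ) := by
      have := hukey j; rwa [hu] at this
    have hcj : c j = lam * (bVec a j : ℂ) * (Complex.exp (S j))⁻¹ :=
      (eq_mul_inv_iff_mul_eq₀ (Complex.exp_ne_zero _)).mpr hukey'
    have h2 : c j / (bVec a j : ℂ) = lam * (Complex.exp (S j))⁻¹ := by
      rw [hcj]
      field_simp
    rw [h2, norm_mul, norm_inv, Complex.norm_exp, ← Real.exp_neg]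
    congr 2
    rw [hS]
    simp [Complex.re_sum, Complex.mul_re]
  have hzero : ∑ i, (Real.log (‖lam‖) - ∑ k, a i k * (ζ k).re) * bVec a i = 0 := by
    have e : ∀ i : Fin (n + 2), (Real.log (‖lam‖) - ∑ k, a i k * (ζ k).re) * bVec a i
        = Real.log (‖lam‖) * bVec a i - ∑ k, (ζ k).re * (a i k * bVec a i) := by
      intro i
      rw [sub_mul, Finset.sum_mul]
      congr 1
      exact Finset.sum_congr rfl fun k _ => by ring
    rw [Finset.sum_congr rfl fun i _ => e i, Finset.sum_sub_distrib, ← Finset.mul_sum, hsum1,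
      mul_zero, zero_sub, neg_eq_zero, Finset.sum_comm]
    refine Finset.sum_eq_zero fun k _ => ?_
    have : ∑ i, (ζ k).re * (a i k * bVec a i) = (ζ k).re * ∑ i, a i k * bVec a i := by
      rw [Finset.mul_sum]
    rw [this, hsum2 k, mul_zero]
  calc ∏ i, ‖c i / (bVec a i : ℂ)‖ ^ (bVec a i)
      = ∏ i, Real.exp ((Real.log (‖lam‖) - ∑ k, a i k * (ζ k).re) * bVec a i) := by
        refine Finset.prod_congr rfl fun i _ => ?_
        rw [habs i, Real.rpow_def_of_pos (by positivity),
          Real.log_mul hrpos.ne' (Real.exp_ne_zero _), Real.log_exp]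
        ring_nf
    _ = Real.exp (∑ i, (Real.log (‖lam‖) - ∑ k, a i k * (ζ k).re) * bVec a i) := by
        rw [Real.exp_sum]
    _ = 1 := by rw [hzero, Real.exp_zero]
end

section
/- Let A = {a_1,...,a_{n+2}} ⊂ R^n be a non-degenerate circuit and g(y) = ∑ c_i e^{a_i·y} with c_i ∈ R*. Then the real zero set of g contains at most one degenerate point (a point where g and all its partial derivatives vanish). -/
theorem stmt9 {n : ℕ} (a : Fin (n + 2) → Fin n → ℝ) (ha : IsNondegCircuit a)
    (c : Fin (n + 2) → ℝ) (hc : ∀ i, c i ≠ 0) (ζ₁ ζ₂ : Fin n → ℝ)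
    (hg₁ : ∑ i, c i * Real.exp (∑ k, a i k * ζ₁ k) = 0)
    (hdg₁ : ∀ k, ∑ i, c i * a i k * Real.exp (∑ l, a i l * ζ₁ l) = 0)
    (hg₂ : ∑ i, c i * Real.exp (∑ k, a i k * ζ₂ k) = 0)
    (hdg₂ : ∀ k, ∑ i, c i * a i k * Real.exp (∑ l, a i l * ζ₂ l) = 0) :
    ζ₁ = ζ₂ := by
  set E₁ : Fin (n + 2) → ℝ := fun i => Real.exp (∑ k, a i k * ζ₁ k) with hE₁
  set E₂ : Fin (n + 2) → ℝ := fun i => Real.exp (∑ k, a i k * ζ₂ k) with hE₂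
  -- the key weight vector, a difference of two kernel vectors of Â
  set w : Fin (n + 2) → ℝ :=
    fun j => (c 0 * E₂ 0) * (c j * E₁ j) - (c 0 * E₁ 0) * (c j * E₂ j) with hw
  have hwsum : ∑ j, w j = 0 := by
    simp only [hw, hE₁, hE₂, Finset.sum_sub_distrib, ← Finset.mul_sum, hg₁, hg₂, mul_zero, sub_zero]
  have hwvec : ∑ j, w j • a j = 0 := by
    funext k
    have h1 := hdg₁ k
    have h2 := hdg₂ k
    simp only [Finset.sum_apply, Pi.smul_apply, smul_eq_mul, Pi.zero_apply, hw]
    have : ∀ j, ((c 0 * E₂ 0) * (c j * E₁ j) - (c 0 * E₁ 0) * (c j * E₂ j)) * a j k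
        = (c 0 * E₂ 0) * (c j * a j k * E₁ j) - (c 0 * E₁ 0) * (c j * a j k * E₂ j) := by
      intro j; ring
    rw [Finset.sum_congr rfl fun j _ => this j, Finset.sum_sub_distrib,
      ← Finset.mul_sum, ← Finset.mul_sum, h1, h2, mul_zero, mul_zero, sub_zero]
  -- w vanishes
  have hw0 : w 0 = 0 := by simp [hw]; ring
  have hwall : ∀ j, w j = 0 := by
    have hai := affineIndependent_iff.1 (ha.2 0)
    have key := hai Finset.univ (fun i => w ((0 : Fin (n + 2)).succAbove i)) ?_ ?_
    · intro j
      rcases Fin.eq_zero_or_eq_succ j with rfl | ⟨i, rfl⟩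
      · exact hw0
      · have := key i (Finset.mem_univ i)
        simpa [Fin.succAbove_zero] using this
    · have := Fin.sum_univ_succAbove (fun j => w j) 0
      rw [hwsum, hw0, zero_add] at this
      exact this.symm
    · have := Fin.sum_univ_succAbove (fun j => w j • a j) 0
      rw [hwvec, hw0, zero_smul, zero_add] at this
      exact this.symm
  -- from w j = 0 deduce equal dot products with d := ζ₁ - ζ₂
  have hdot : ∀ j, ∑ k, a j k * (ζ₁ k - ζ₂ k) = ∑ k, a 0 k * (ζ₁ k - ζ₂ k) := by
    intro j
    have h := hwall j
    rw [hw] at h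
    have h2 : c 0 * c j * (E₂ 0 * E₁ j - E₁ 0 * E₂ j) = 0 := by linear_combination h
    have h' : E₂ 0 * E₁ j = E₁ 0 * E₂ j := by
      rcases mul_eq_zero.1 h2 with h' | h'
      · rcases mul_eq_zero.1 h' with h'' | h''
        · exact absurd h'' (hc 0)
        · exact absurd h'' (hc j)
      · linarith
    rw [hE₁, hE₂] at h'
    simp only [← Real.exp_add] at h'
    have h'' : (∑ k, a 0 k * ζ₂ k) + ∑ k, a j k * ζ₁ k
        = (∑ k, a 0 k * ζ₁ k) + ∑ k, a j k * ζ₂ k := Real.exp_injective h'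
    have expand : ∀ (v : Fin n → ℝ) (i : Fin (n+2)),
        ∑ k, a i k * (ζ₁ k - ζ₂ k) = (∑ k, a i k * ζ₁ k) - ∑ k, a i k * ζ₂ k := by
      intro v i
      rw [← Finset.sum_sub_distrib]
      exact Finset.sum_congr rfl fun k _ => by ring
    rw [expand ζ₁ j, expand ζ₁ 0]
    linarith
  -- now show d = 0 using affine independence of n+1 of the points
  set d : Fin n → ℝ := fun k => ζ₁ k - ζ₂ k with hd
  have hdperp : ∀ j : Fin (n + 2), ∑ k, (a j k - a 0 k) * d k = 0 := by
    intro j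
    have h := hdot j
    have expand : ∑ k, (a j k - a 0 k) * d k
        = (∑ k, a j k * (ζ₁ k - ζ₂ k)) - ∑ k, a 0 k * (ζ₁ k - ζ₂ k) := by
      rw [← Finset.sum_sub_distrib]
      exact Finset.sum_congr rfl fun k _ => by simp only [hd]; ring
    rw [expand, h, sub_self]
  -- the n+1 points a ∘ (last).succAbove are affinely independent; base point index 0
  have hAI : AffineIndependent ℝ (a ∘ (Fin.last (n + 1)).succAbove) := ha.2 _
  have hLI := (affineIndependent_iff_linearIndependent_vsub ℝ
    (a ∘ (Fin.last (n + 1)).succAbove) 0).1 hAI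
  have hcard : Fintype.card {x : Fin (n + 1) // x ≠ 0} = n := by
    have h := Set.card_ne_eq (0 : Fin (n + 1)); simp only [Fintype.card_fin] at h; exact h
  have hspan : Submodule.span ℝ (Set.range fun i : {x : Fin (n + 1) // x ≠ 0} =>
      (a ∘ (Fin.last (n + 1)).succAbove) ↑i -ᵥ (a ∘ (Fin.last (n + 1)).succAbove) 0) = ⊤ := by
    apply hLI.span_eq_top_of_card_eq_finrank'
    rw [hcard, Module.finrank_pi]; simp
  -- every vector is a span of vectors orthogonal to d, hence d ⬝ d = 0
  have hperp : ∀ x : Fin n → ℝ, ∑ k, x k * d k = 0 := by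
    intro x
    have hx : x ∈ Submodule.span ℝ (Set.range fun i : {x : Fin (n + 1) // x ≠ 0} =>
        (a ∘ (Fin.last (n + 1)).succAbove) ↑i -ᵥ (a ∘ (Fin.last (n + 1)).succAbove) 0) := by
      rw [hspan]; trivial
    induction hx using Submodule.span_induction with
    | mem y hy =>
        obtain ⟨i, rfl⟩ := hy
        have h1 := hdperp ((Fin.last (n + 1)).succAbove (i : Fin (n + 1)))
        have h2 := hdperp ((Fin.last (n + 1)).succAbove (0 : Fin (n + 1)))
        simp only [Function.comp_apply, vsub_eq_sub, Pi.sub_apply]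
        have : ∑ k, (a ((Fin.last (n+1)).succAbove ↑i) k
            - a ((Fin.last (n+1)).succAbove 0) k) * d k
            = (∑ k, (a ((Fin.last (n+1)).succAbove ↑i) k - a 0 k) * d k)
              - ∑ k, (a ((Fin.last (n+1)).succAbove 0) k - a 0 k) * d k := by
          rw [← Finset.sum_sub_distrib]
          exact Finset.sum_congr rfl fun k _ => by ring
        rw [this, h1, h2, sub_zero]
    | zero => simp
    | add y z _ _ hy hz =>
        simp only [Pi.add_apply, add_mul, Finset.sum_add_distrib, hy, hz, add_zero]
    | smul t y _ hy =>
        simp only [Pi.smul_apply, smul_eq_mul, mul_assoc, ← Finset.mul_sum, hy, mul_zero]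
  have hdd := hperp d
  have hdzero : d = 0 := by
    funext k
    have hnn : ∀ k ∈ Finset.univ, (0:ℝ) ≤ d k * d k := fun k _ => mul_self_nonneg _
    have := (Finset.sum_eq_zero_iff_of_nonneg hnn).1 hdd k (Finset.mem_univ k)
    exact mul_self_eq_zero.1 this
  funext k
  have := congrFun hdzero k
  simp only [hd, Pi.zero_apply] at this
  linarith
end

section
/- Let f(x) = ∑_{i=1}^{n+1} c_i x^{a_i} be an honest n-variate (n+1)-nomial with a_1 = 0 (i.e., the points a_2,...,a_{n+1} ∈ R^n are linearly independent) and real nonzero coefficients, with real exponents and x ranging over R_+^n. Then there exist c ∈ R and ℓ ∈ {0,...,n} such that the image f(R_+^n) equals the image of g(x) := c + x_1 + ... + x_ℓ - x_{ℓ+1} - ... - x_n on R_+^n, where c = c_1 and ℓ is the number of positive coefficients among c_2,...,c_{n+1}. -/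
open Finset

private lemma card_filter_val_lt' (n ℓ : ℕ) (h : ℓ ≤ n) :
    (univ.filter fun i : Fin n => (i : ℕ) < ℓ).card = ℓ := by
  apply Finset.card_eq_of_bijective (fun j hj => ⟨j, lt_of_lt_of_le hj h⟩)
  · intro a ha
    simp only [mem_filter, mem_univ, true_and] at ha
    exact ⟨a, ha, rfl⟩
  · intro j hj
    simp [hj]
  · intro i j hi hj hij
    simpa using congrArg Fin.val hij

private lemma exists_perm' (n ℓ : ℕ) (s : Finset (Fin n)) (hs : s.card = ℓ) :
    ∃ σ : Equiv.Perm (Fin n), ∀ i, σ i ∈ s ↔ (i : ℕ) < ℓ := by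
  have hℓn : ℓ ≤ n := by
    simpa [hs] using Finset.card_le_card (Finset.subset_univ s)
  set t : Finset (Fin n) := univ.filter fun i : Fin n => (i : ℕ) < ℓ with ht
  have htc : t.card = ℓ := card_filter_val_lt' n ℓ hℓn
  have h1 : Fintype.card {x // x ∈ t} = Fintype.card {x // x ∈ s} := by
    simp [Fintype.card_coe, htc, hs]
  have h2 : Fintype.card {x // ¬ x ∈ t} = Fintype.card {x // ¬ x ∈ s} := by
    rw [Fintype.card_subtype_compl, Fintype.card_subtype_compl]
    simp [Fintype.card_coe, htc, hs]
  let e1 := Fintype.equivOfCardEq h1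
  let e2 := Fintype.equivOfCardEq h2
  refine ⟨(Equiv.sumCompl (· ∈ t)).symm.trans ((Equiv.sumCongr e1 e2).trans
    (Equiv.sumCompl (· ∈ s))), fun i => ?_⟩
  by_cases hi : i ∈ t
  · rw [Equiv.trans_apply, Equiv.sumCompl_symm_apply_of_pos hi]
    simp only [Equiv.trans_apply, Equiv.sumCongr_apply, Sum.map_inl,
      Equiv.sumCompl_apply_inl]
    have : ((i : ℕ) < ℓ) := by simpa [ht] using hi
    simp [this, (e1 ⟨i, hi⟩).2]
  · rw [Equiv.trans_apply, Equiv.sumCompl_symm_apply_of_neg hi]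
    simp only [Equiv.trans_apply, Equiv.sumCongr_apply, Sum.map_inr,
      Equiv.sumCompl_apply_inr]
    have : ¬((i : ℕ) < ℓ) := by simpa [ht] using hi
    simp [this, (e2 ⟨i, hi⟩).2]

private lemma monomial_surj' (n : ℕ) (a : Fin (n + 1) → Fin n → ℝ)
    (hind : LinearIndependent ℝ (fun i : Fin n => a i.succ))
    (t : Fin n → ℝ) (ht : ∀ i, 0 < t i) :
    ∃ x : Fin n → ℝ, (∀ k, 0 < x k) ∧ ∀ i : Fin n, (∏ k, x k ^ a i.succ k) = t i := by
  set A : Matrix (Fin n) (Fin n) ℝ := Matrix.of (fun i k => a i.succ k) with hA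
  have hAu : IsUnit A := Matrix.linearIndependent_rows_iff_isUnit.mp hind
  obtain ⟨u, hu⟩ := Matrix.mulVec_surjective_iff_isUnit.mpr hAu
    (fun i => Real.log (t i))
  refine ⟨fun k => Real.exp (u k), fun k => Real.exp_pos _, fun i => ?_⟩
  have : ∀ k, Real.exp (u k) ^ a i.succ k = Real.exp (a i.succ k * u k) := by
    intro k
    rw [Real.rpow_def_of_pos (Real.exp_pos _), Real.log_exp, mul_comm]
  rw [Finset.prod_congr rfl fun k _ => this k, ← Real.exp_sum]
  have hm : ∑ k, a i.succ k * u k = Real.log (t i) := by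
    have := congrFun hu i
    simpa [Matrix.mulVec, dotProduct, hA] using this
  rw [hm, Real.exp_log (ht i)]

open Finset in
theorem stmt11 (n : ℕ) (a : Fin (n + 1) → Fin n → ℝ) (c : Fin (n + 1) → ℝ)
    (ha0 : a 0 = 0) (hind : LinearIndependent ℝ (fun i : Fin n => a i.succ))
    (hc : ∀ i, c i ≠ 0) :
    {y : ℝ | ∃ x : Fin n → ℝ, (∀ i, 0 < x i) ∧ (∑ i, c i * ∏ k, x k ^ a i k) = y} =
    {y : ℝ | ∃ x : Fin n → ℝ, (∀ i, 0 < x i) ∧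
      (c 0 + ∑ i : Fin n,
        (if (i : ℕ) < (univ.filter fun i : Fin n => 0 < c i.succ).card then x i else -x i))
        = y} := by
  set ℓ := (univ.filter fun i : Fin n => 0 < c i.succ).card with hℓ
  obtain ⟨σ, hσ⟩ := exists_perm' n ℓ (univ.filter fun i : Fin n => 0 < c i.succ) rfl
  have hσ' : ∀ i, 0 < c (σ i).succ ↔ (i : ℕ) < ℓ := by
    intro i; rw [← hσ i]; simp
  have hzero : ∀ x : Fin n → ℝ, (∀ k, 0 < x k) →
      c 0 * ∏ k, x k ^ a 0 k = c 0 := by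
    intro x hx
    rw [ha0]
    simp [Real.rpow_zero]
  ext y
  simp only [Set.mem_setOf_eq]
  constructor
  · rintro ⟨x, hx, rfl⟩
    set t : Fin n → ℝ := fun i => ∏ k, x k ^ a i.succ k with htdef
    have ht : ∀ i, 0 < t i := fun i =>
      Finset.prod_pos fun k _ => Real.rpow_pos_of_pos (hx k) _
    refine ⟨fun i => |c (σ i).succ| * t (σ i),
      fun i => mul_pos (abs_pos.mpr (hc _)) (ht _), ?_⟩
    rw [Fin.sum_univ_succ, hzero x hx]
    congr 1
    have hbody : ∀ i : Fin n,
        (if (i : ℕ) < ℓ then |c (σ i).succ| * t (σ i) else -(|c (σ i).succ| * t (σ i)))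
          = c (σ i).succ * t (σ i) := by
      intro i
      by_cases hi : (i : ℕ) < ℓ
      · rw [if_pos hi, abs_of_pos ((hσ' i).mpr hi)]
      · have hneg : c (σ i).succ < 0 :=
          lt_of_le_of_ne (not_lt.mp fun h => hi ((hσ' i).mp h)) (hc _)
        rw [if_neg hi, abs_of_neg hneg]
        ring
    rw [Finset.sum_congr rfl fun i _ => hbody i]
    exact Equiv.sum_comp σ (fun j => c j.succ * t j)
  · rintro ⟨x, hx, rfl⟩
    set t : Fin n → ℝ := fun j => x (σ.symm j) / |c j.succ| with htdef
    have ht : ∀ j, 0 < t j := fun j =>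
      div_pos (hx _) (abs_pos.mpr (hc _))
    obtain ⟨x', hx', hx'eq⟩ := monomial_surj' n a hind t ht
    refine ⟨x', hx', ?_⟩
    rw [Fin.sum_univ_succ, hzero x' hx']
    congr 1
    rw [Finset.sum_congr rfl fun j _ => by rw [hx'eq j]]
    rw [← Equiv.sum_comp σ (fun j => c j.succ * t j)]
    apply Finset.sum_congr rfl
    intro i _
    by_cases hi : (i : ℕ) < ℓ
    · have hpos := (hσ' i).mpr hi
      rw [if_pos hi]
      simp only [htdef, Equiv.symm_apply_apply, abs_of_pos hpos]
      field_simp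
    · have hneg : c (σ i).succ < 0 :=
        lt_of_le_of_ne (not_lt.mp fun h => hi ((hσ' i).mp h)) (hc _)
      rw [if_neg hi]
      simp only [htdef, Equiv.symm_apply_apply, abs_of_neg hneg]
      rw [div_neg, mul_comm, neg_mul, div_mul_cancel₀ _ (hc _)]
end
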